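/- arXiv:2101.10432 — 4 statements merged into one kernel-verified Lean document; each statement's English description precedes it below -/
import Mathlib

section
/- Let χ be a primitive Dirichlet character of conductor F and k ≥ 1 an integer. Then B_k(χ) = (1/F)·Σ_{1≤j≤k+1} ((−1)^{j−1}/j)·C(k+1,j)·(Σ_{0≤r<Fj} χ(r)·r^k), where χ(r) means χ(r mod F) and C(k+1,j) is the binomial coefficient. -/
open scoped Classical

/-- The generalized (`χ`-)Bernoulli numbers `B : ℕ → ℂ` of a Dirichlet character `χ`
modulo `F`, defined by the exponential generating function
`T/(e^{FT}-1) · ∑_{0 ≤ r < F} χ(r) e^{rT} = ∑_{k ≥ 0} B k · T^k/k!`. -/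
def IsBernoulliChar {F : ℕ} (χ : DirichletCharacter ℂ F) (B : ℕ → ℂ) : Prop :=
  PowerSeries.X *
      ∑ r ∈ Finset.range F, PowerSeries.C (χ (r : ZMod F)) *
        PowerSeries.rescale (r : ℂ) (PowerSeries.exp ℂ)
    = (PowerSeries.rescale (F : ℂ) (PowerSeries.exp ℂ) - 1) *
        PowerSeries.mk (fun n => B n / n.factorial)

lemma scaled_id (F : ℕ) (χ : DirichletCharacter ℂ F) (B : ℕ → ℂ) (hB : IsBernoulliChar χ B)
    (j : ℕ) :
    PowerSeries.X * ∑ r ∈ Finset.range (F * j), PowerSeries.C (χ (r : ZMod F)) *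
        PowerSeries.rescale (r : ℂ) (PowerSeries.exp ℂ)
    = (PowerSeries.rescale ((F : ℂ) * j) (PowerSeries.exp ℂ) - 1) *
        PowerSeries.mk (fun n => B n / n.factorial) := by
  induction j with
  | zero => simp [PowerSeries.rescale_zero]
  | succ j ih =>
    have hsplit : ∑ r ∈ Finset.range (F * (j + 1)), PowerSeries.C (χ (r : ZMod F)) *
          PowerSeries.rescale (r : ℂ) (PowerSeries.exp ℂ)
        = (∑ r ∈ Finset.range (F * j), PowerSeries.C (χ (r : ZMod F)) *
            PowerSeries.rescale (r : ℂ) (PowerSeries.exp ℂ))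
          + PowerSeries.rescale ((F : ℂ) * j) (PowerSeries.exp ℂ) *
            ∑ s ∈ Finset.range F, PowerSeries.C (χ (s : ZMod F)) *
              PowerSeries.rescale (s : ℂ) (PowerSeries.exp ℂ) := by
      rw [Finset.range_eq_Ico, ← Finset.sum_Ico_consecutive _ (Nat.zero_le (F * j))
        (Nat.mul_le_mul_left F (Nat.le_succ j)), ← Finset.range_eq_Ico]
      congr 1
      rw [Finset.sum_Ico_eq_sum_range]
      have hFdiff : F * (j + 1) - F * j = F := by ring_nf; omega
      rw [hFdiff, Finset.mul_sum]
      refine Finset.sum_congr rfl fun s hs => ?_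
      have hχ : ((F * j + s : ℕ) : ZMod F) = (s : ZMod F) := by
        push_cast [ZMod.natCast_self]; ring
      have hc : ((F * j + s : ℕ) : ℂ) = (F : ℂ) * j + s := by push_cast; ring
      rw [hχ, hc, ← PowerSeries.exp_mul_exp_eq_exp_add]
      ring
    have hXg : PowerSeries.X * (PowerSeries.rescale ((F : ℂ) * j) (PowerSeries.exp ℂ) *
          ∑ s ∈ Finset.range F, PowerSeries.C (χ (s : ZMod F)) *
            PowerSeries.rescale (s : ℂ) (PowerSeries.exp ℂ))
        = PowerSeries.rescale ((F : ℂ) * j) (PowerSeries.exp ℂ) *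
            ((PowerSeries.rescale (F : ℂ) (PowerSeries.exp ℂ) - 1) *
              PowerSeries.mk (fun n => B n / n.factorial)) := by
      rw [mul_left_comm, hB]
    have hadd : PowerSeries.rescale ((F : ℂ) * ((j + 1 : ℕ) : ℂ)) (PowerSeries.exp ℂ)
        = PowerSeries.rescale ((F : ℂ) * j) (PowerSeries.exp ℂ) *
            PowerSeries.rescale (F : ℂ) (PowerSeries.exp ℂ) := by
      rw [PowerSeries.exp_mul_exp_eq_exp_add]
      congr 1
      push_cast; ring
    rw [hsplit, mul_add, ih, hXg, hadd]
    ring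

lemma coeff_id (F : ℕ) (χ : DirichletCharacter ℂ F) (B : ℕ → ℂ) (hB : IsBernoulliChar χ B)
    (j k : ℕ) :
    ∑ r ∈ Finset.range (F * j), χ (r : ZMod F) * (r : ℂ) ^ k * ((k.factorial : ℂ))⁻¹
    = ∑ i ∈ Finset.range (k + 1), ((F : ℂ) * j) ^ (i + 1) * (((i + 1).factorial : ℂ))⁻¹ *
        (B (k - i) / ((k - i).factorial : ℂ)) := by
  have h := congrArg (PowerSeries.coeff (k + 1)) (scaled_id F χ B hB j)
  rw [PowerSeries.coeff_succ_X_mul, map_sum] at h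
  simp only [PowerSeries.coeff_C_mul, PowerSeries.coeff_rescale, PowerSeries.coeff_exp,
    map_div₀, map_one, map_natCast] at h
  rw [PowerSeries.coeff_mul, Finset.Nat.sum_antidiagonal_eq_sum_range_succ_mk] at h
  simp only [map_sub, PowerSeries.coeff_rescale, PowerSeries.coeff_exp, PowerSeries.coeff_one,
    PowerSeries.coeff_mk, map_div₀, map_one, map_natCast] at h
  rw [Finset.sum_range_succ'] at h
  simp only [pow_zero, Nat.factorial_zero, Nat.cast_one, if_pos rfl] at h
  calc ∑ r ∈ Finset.range (F * j), χ (r : ZMod F) * (r : ℂ) ^ k * ((k.factorial : ℂ))⁻¹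
      = ∑ r ∈ Finset.range (F * j), χ (r : ZMod F) * ((r : ℂ) ^ k * (1 / (k.factorial : ℂ))) := by
        refine Finset.sum_congr rfl fun r hr => by ring
    _ = ∑ i ∈ Finset.range (k + 1), ((F : ℂ) * j) ^ (i + 1) * (((i + 1).factorial : ℂ))⁻¹ *
          (B (k - i) / ((k - i).factorial : ℂ)) := by
        rw [h]
        norm_num
        refine Finset.sum_congr rfl fun i hi => ?_
        have hki : k + 1 - (i + 1) = k - i := by omega
        rw [hki]

lemma alt_sum_pow' : ∀ (m n : ℕ), m < n →
    ∑ j ∈ Finset.range (n + 1), (-1 : ℂ) ^ j * (n.choose j : ℂ) * (j : ℂ) ^ m = 0 := by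
  intro m
  induction m using Nat.strong_induction_on with
  | _ m ih =>
    intro n hmn
    rcases m with _ | m
    · simp only [pow_zero, mul_one]
      have := @Int.alternating_sum_range_choose n
      rw [if_neg (by omega : n ≠ 0)] at this
      exact_mod_cast congrArg (Int.cast : ℤ → ℂ) this
    · obtain ⟨n, rfl⟩ : ∃ n', n = n' + 1 := ⟨n - 1, (Nat.succ_pred_eq_of_pos (by omega)).symm⟩
      rw [Finset.sum_range_succ']
      simp only [pow_zero, Nat.cast_zero, zero_pow (Nat.succ_ne_zero m), mul_zero, add_zero,
        Nat.cast_add, Nat.cast_one]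
      have key : ∀ j ∈ Finset.range (n + 1),
          (-1 : ℂ) ^ (j + 1) * ((n + 1).choose (j + 1) : ℂ) * ((j : ℂ) + 1) ^ (m + 1)
          = (-((n : ℂ) + 1)) * ((-1 : ℂ) ^ j * ((n).choose j : ℂ) * ((j : ℂ) + 1) ^ m) := by
        intro j hj
        have h1 : ((n : ℂ) + 1) * (n.choose j : ℂ) = ((n + 1).choose (j + 1) : ℂ) * ((j : ℂ) + 1) := by
          exact_mod_cast congrArg (Nat.cast : ℕ → ℂ) (Nat.add_one_mul_choose_eq n j)
        linear_combination ((-1:ℂ)^j * ((j:ℂ)+1)^m) * h1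
      rw [Finset.sum_congr rfl key, ← Finset.mul_sum]
      have expand : ∀ j ∈ Finset.range (n + 1),
          (-1 : ℂ) ^ j * ((n).choose j : ℂ) * ((j : ℂ) + 1) ^ m
          = ∑ t ∈ Finset.range (m + 1),
              (m.choose t : ℂ) * ((-1 : ℂ) ^ j * ((n).choose j : ℂ) * (j : ℂ) ^ t) := by
        intro j hj
        rw [add_pow (j : ℂ) 1 m, Finset.mul_sum]
        refine Finset.sum_congr rfl fun t ht => by ring
      rw [Finset.sum_congr rfl expand, Finset.sum_comm]
      have inner : ∀ t ∈ Finset.range (m + 1),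
          ∑ j ∈ Finset.range (n + 1), (m.choose t : ℂ) * ((-1 : ℂ) ^ j * ((n).choose j : ℂ) * (j : ℂ) ^ t)
          = 0 := by
        intro t ht
        rw [Finset.mem_range] at ht
        rw [← Finset.mul_sum]
        rcases Nat.eq_zero_or_pos n with rfl | hn
        · omega
        · obtain ⟨n', rfl⟩ : ∃ n'', n = n'' + 1 := ⟨n - 1, (Nat.succ_pred_eq_of_pos hn).symm⟩
          rw [ih t (by omega) (n' + 1) (by omega), mul_zero]
      rw [Finset.sum_congr rfl inner, Finset.sum_const_zero, mul_zero]

lemma altA (k i : ℕ) (hi : i < k + 1) :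
    ∑ j ∈ Finset.Icc 1 (k + 1), ((-1 : ℂ) ^ (j - 1) / (j : ℂ)) * (((k + 1).choose j : ℕ) : ℂ) *
      (j : ℂ) ^ (i + 1) = if i = 0 then 1 else 0 := by
  rw [← Finset.Ico_add_one_right_eq_Icc, Finset.sum_Ico_eq_sum_range]
  simp only [Nat.add_sub_cancel]
  have hshift := Finset.sum_range_succ'
    (fun j => (-1 : ℂ) ^ j * (((k + 1).choose j : ℕ) : ℂ) * (j : ℂ) ^ i) (k + 1)
  rw [alt_sum_pow' i (k + 1) hi] at hshift
  have key : ∀ t ∈ Finset.range (k + 1),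
      ((-1 : ℂ) ^ (1 + t - 1) / ((1 + t : ℕ) : ℂ)) * (((k + 1).choose (1 + t) : ℕ) : ℂ) *
        ((1 + t : ℕ) : ℂ) ^ (i + 1)
      = -((-1 : ℂ) ^ (t + 1) * (((k + 1).choose (t + 1) : ℕ) : ℂ) * ((t + 1 : ℕ) : ℂ) ^ i) := by
    intro t ht
    have h1 : 1 + t - 1 = t := by omega
    have h2 : 1 + t = t + 1 := by omega
    have hne : ((t + 1 : ℕ) : ℂ) ≠ 0 := Nat.cast_ne_zero.2 (Nat.succ_ne_zero t)
    rw [h1, h2, pow_succ ((t + 1 : ℕ) : ℂ) i, pow_succ (-1 : ℂ) t, div_mul_eq_mul_div,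
      div_mul_eq_mul_div, div_eq_iff hne]
    ring
  rw [Finset.sum_congr rfl key]
  have hS : ∑ t ∈ Finset.range (k + 1),
      (-1 : ℂ) ^ (t + 1) * (((k + 1).choose (t + 1) : ℕ) : ℂ) * ((t + 1 : ℕ) : ℂ) ^ i
      = -((0 : ℂ) ^ i) := by
    have h0 : ((-1 : ℂ) ^ 0 * (((k + 1).choose 0 : ℕ) : ℂ) * ((0 : ℕ) : ℂ) ^ i) = (0 : ℂ) ^ i := by
      simp
    rw [h0] at hshift
    linear_combination -hshift
  rw [Finset.sum_neg_distrib, hS, neg_neg, zero_pow_eq]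

/-- `B_k(χ) = (1/F)·∑_{1≤j≤k+1} ((−1)^{j−1}/j)·C(k+1,j)·∑_{0≤r<Fj} χ(r)·r^k`. -/
theorem bernoulliChar_eq_alternating_sum
    (F : ℕ) [NeZero F] (χ : DirichletCharacter ℂ F) (hχ : χ.IsPrimitive)
    (k : ℕ) (hk : 1 ≤ k) (B : ℕ → ℂ) (hB : IsBernoulliChar χ B) :
    B k = (1 / (F : ℂ)) *
      ∑ j ∈ Finset.Icc 1 (k + 1),
        ((-1 : ℂ) ^ (j - 1) / (j : ℂ)) * ((k + 1).choose j : ℂ) *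
          ∑ r ∈ Finset.range (F * j), χ (r : ZMod F) * (r : ℂ) ^ k := by
  have hF : (F : ℂ) ≠ 0 := Nat.cast_ne_zero.2 (NeZero.ne F)
  have hkfac : ((k.factorial : ℕ) : ℂ) ≠ 0 := Nat.cast_ne_zero.2 k.factorial_ne_zero
  have hS : ∀ j : ℕ, ∑ r ∈ Finset.range (F * j), χ (r : ZMod F) * (r : ℂ) ^ k
      = ∑ i ∈ Finset.range (k + 1), (k.factorial : ℂ) * ((F : ℂ) * j) ^ (i + 1) *
          (((i + 1).factorial : ℂ))⁻¹ * (B (k - i) / ((k - i).factorial : ℂ)) := by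
    intro j
    have h := coeff_id F χ B hB j k
    rw [← Finset.sum_mul] at h
    calc (∑ r ∈ Finset.range (F * j), χ (r : ZMod F) * (r : ℂ) ^ k)
        = (∑ r ∈ Finset.range (F * j), χ (r : ZMod F) * (r : ℂ) ^ k) *
            ((k.factorial : ℂ))⁻¹ * (k.factorial : ℂ) := by
          field_simp
      _ = (∑ i ∈ Finset.range (k + 1), ((F : ℂ) * j) ^ (i + 1) * (((i + 1).factorial : ℂ))⁻¹ *
            (B (k - i) / ((k - i).factorial : ℂ))) * (k.factorial : ℂ) := by rw [h]
      _ = _ := by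
          rw [Finset.sum_mul]
          exact Finset.sum_congr rfl fun i hi => by ring
  have main : ∑ j ∈ Finset.Icc 1 (k + 1),
      ((-1 : ℂ) ^ (j - 1) / (j : ℂ)) * ((k + 1).choose j : ℂ) *
        ∑ r ∈ Finset.range (F * j), χ (r : ZMod F) * (r : ℂ) ^ k = (F : ℂ) * B k := by
    calc ∑ j ∈ Finset.Icc 1 (k + 1),
        ((-1 : ℂ) ^ (j - 1) / (j : ℂ)) * ((k + 1).choose j : ℂ) *
          ∑ r ∈ Finset.range (F * j), χ (r : ZMod F) * (r : ℂ) ^ k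
        = ∑ j ∈ Finset.Icc 1 (k + 1), ∑ i ∈ Finset.range (k + 1),
            ((k.factorial : ℂ) * (F : ℂ) ^ (i + 1) * (((i + 1).factorial : ℂ))⁻¹ *
              (B (k - i) / ((k - i).factorial : ℂ))) *
              (((-1 : ℂ) ^ (j - 1) / (j : ℂ)) * ((k + 1).choose j : ℂ) * (j : ℂ) ^ (i + 1)) := by
          refine Finset.sum_congr rfl fun j hj => ?_
          rw [hS j, Finset.mul_sum]
          refine Finset.sum_congr rfl fun i hi => ?_
          rw [mul_pow]
          ring
      _ = ∑ i ∈ Finset.range (k + 1),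
            ((k.factorial : ℂ) * (F : ℂ) ^ (i + 1) * (((i + 1).factorial : ℂ))⁻¹ *
              (B (k - i) / ((k - i).factorial : ℂ))) *
            ∑ j ∈ Finset.Icc 1 (k + 1),
              ((-1 : ℂ) ^ (j - 1) / (j : ℂ)) * ((k + 1).choose j : ℂ) * (j : ℂ) ^ (i + 1) := by
          rw [Finset.sum_comm]
          exact Finset.sum_congr rfl fun i hi => by rw [Finset.mul_sum]
      _ = ∑ i ∈ Finset.range (k + 1),
            ((k.factorial : ℂ) * (F : ℂ) ^ (i + 1) * (((i + 1).factorial : ℂ))⁻¹ *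
              (B (k - i) / ((k - i).factorial : ℂ))) * (if i = 0 then 1 else 0) := by
          refine Finset.sum_congr rfl fun i hi => ?_
          rw [altA k i (Finset.mem_range.mp hi)]
      _ = (F : ℂ) * B k := by
          simp only [mul_ite, mul_one, mul_zero, Finset.sum_ite_eq' (Finset.range (k + 1)) 0]
          rw [if_pos (Finset.mem_range.mpr (Nat.succ_pos k))]
          simp only [Nat.sub_zero, pow_one, Nat.factorial_one, Nat.cast_one, inv_one]
          field_simp
          ring
  rw [main]
  field_simp
end

section
/- Let χ be a nontrivial primitive Dirichlet character of conductor F which is odd (χ(−1) = −1). Then for every integer k ≥ 1: Σ_{0≤j≤(k−1)/2} C(k,2j+1)·F^{2j}·B_{2k−1−2j}(χ) = ((−1)^k·k/F)·Σ_{0≤r<F/2} χ(r)·r^{k−1}·(F−r)^{k−1}·(F−2r). -/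
open scoped Classical

section AuxLemmas
open Polynomial Finset

lemma aux_deriv_eval (k : ℕ) (a x : ℂ) :
    eval x (derivative (X ^ (k+1) * (X - C a) ^ (k+1)))
      = (k+1) * x ^ k * (x - a) ^ k * (2 * x - a) := by
  rw [derivative_mul, derivative_X_pow, derivative_pow, derivative_sub, derivative_X,
    derivative_C]
  simp only [Nat.add_sub_cancel, eval_add, eval_mul, eval_pow, eval_sub, eval_X, eval_C,
    eval_natCast, sub_zero, eval_one, mul_one, Nat.cast_add, Nat.cast_one]
  rw [pow_succ x k, pow_succ (x - a) k]
  ring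

lemma aux_left (N : ℕ) (hN : 1 ≤ N) (Q : Polynomial ℂ) (hQ : Q.natDegree ≤ N) (x : ℂ) :
    ∑ i ∈ Finset.range (N+1), Q.coeff i * i.factorial *
        (PowerSeries.coeff (R := ℂ) i) (PowerSeries.X * PowerSeries.rescale x (PowerSeries.exp ℂ))
      = Polynomial.eval x (Polynomial.derivative Q) := by
  rw [Finset.sum_range_succ']
  have h0 : (PowerSeries.coeff (R := ℂ) 0) (PowerSeries.X * PowerSeries.rescale x (PowerSeries.exp ℂ)) = 0 := by
    simp [PowerSeries.coeff_zero_eq_constantCoeff, map_mul]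
  rw [h0]
  have hd : (derivative Q).natDegree < N :=
    lt_of_le_of_lt (Polynomial.natDegree_derivative_le Q) (by omega)
  rw [Polynomial.eval_eq_sum_range' hd]
  simp only [mul_zero, add_zero]
  apply Finset.sum_congr rfl
  intro j hj
  rw [PowerSeries.coeff_succ_X_mul, PowerSeries.coeff_rescale, PowerSeries.coeff_exp,
    Polynomial.coeff_derivative]
  have hfac : ((j.factorial : ℂ)) ≠ 0 := Nat.cast_ne_zero.2 (Nat.factorial_ne_zero j)
  rw [Nat.factorial_succ]
  push_cast
  field_simp

lemma aux_right (N : ℕ) (Q : Polynomial ℂ) (hQ : Q.natDegree ≤ N) (a : ℂ) (B : ℕ → ℂ) :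
    ∑ i ∈ Finset.range (N+1), Q.coeff i * i.factorial *
        (PowerSeries.coeff (R := ℂ) i) ((PowerSeries.rescale a (PowerSeries.exp ℂ) - 1) *
          PowerSeries.mk (fun n => B n / n.factorial))
      = ∑ b ∈ Finset.range (N+1), ((Polynomial.taylor a Q).coeff b - Q.coeff b) * B b := by
  have he0 : (PowerSeries.coeff (R := ℂ) 0) (PowerSeries.rescale a (PowerSeries.exp ℂ) - 1) = 0 := by
    rw [map_sub, PowerSeries.coeff_rescale, PowerSeries.coeff_exp]
    simp
  have heS : ∀ m : ℕ, (PowerSeries.coeff (R := ℂ) (m+1)) (PowerSeries.rescale a (PowerSeries.exp ℂ) - 1)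
      = a^(m+1) / (m+1).factorial := by
    intro m
    simp [PowerSeries.coeff_rescale, PowerSeries.coeff_exp, PowerSeries.coeff_one]
    rw [div_eq_mul_inv]
  -- Step 1: rewrite each coeff of the product as a sum over b in range (N+1)
  have step1 : ∀ i ∈ Finset.range (N+1),
      Q.coeff i * i.factorial *
        (PowerSeries.coeff (R := ℂ) i) ((PowerSeries.rescale a (PowerSeries.exp ℂ) - 1) *
          PowerSeries.mk (fun n => B n / n.factorial))
      = ∑ b ∈ Finset.range (N+1), Q.coeff i * i.factorial *
          ((PowerSeries.coeff (R := ℂ) (i-b)) (PowerSeries.rescale a (PowerSeries.exp ℂ) - 1)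
            * (B b / b.factorial)) := by
    intro i hi
    rw [PowerSeries.coeff_mul]
    rw [← Finset.Nat.sum_antidiagonal_swap]
    simp only [Prod.fst_swap, Prod.snd_swap, PowerSeries.coeff_mk]
    rw [Finset.Nat.sum_antidiagonal_eq_sum_range_succ
      (fun x y => (PowerSeries.coeff (R := ℂ) y) (PowerSeries.rescale a (PowerSeries.exp ℂ) - 1)
        * (B x / x.factorial)) i]
    rw [Finset.mul_sum]
    apply Finset.sum_subset
    · exact Finset.range_subset_range.2 (by simp at hi; omega)
    · intro b _ hb
      simp only [Finset.mem_range, not_lt] at hb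
      have : i - b = 0 := by omega
      rw [this, he0]
      ring
  rw [Finset.sum_congr rfl step1, Finset.sum_comm]
  apply Finset.sum_congr rfl
  intro b hb
  simp only [Finset.mem_range] at hb
  -- inner sum over i
  rw [Finset.range_eq_Ico, ← Finset.sum_Ico_consecutive _ (Nat.zero_le b) (by omega : b ≤ N+1)]
  have hzero : ∑ i ∈ Finset.Ico 0 b, Q.coeff i * i.factorial *
      ((PowerSeries.coeff (R := ℂ) (i-b)) (PowerSeries.rescale a (PowerSeries.exp ℂ) - 1)
        * (B b / b.factorial)) = 0 := by
    apply Finset.sum_eq_zero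
    intro i hi
    simp only [Finset.mem_Ico] at hi
    have : i - b = 0 := by omega
    rw [this, he0]; ring
  rw [hzero, zero_add, Finset.sum_Ico_eq_sum_range]
  have hNb : N + 1 - b = (N - b) + 1 := by omega
  rw [hNb, Finset.sum_range_succ']
  simp only [Nat.add_sub_cancel_left, Nat.sub_self, he0]
  -- taylor coeff side
  have htay : (Polynomial.taylor a Q).coeff b
      = ∑ j ∈ Finset.range ((N - b) + 1), ((j+b).choose b : ℂ) * Q.coeff (j+b) * a^j := by
    rw [Polynomial.taylor_coeff]
    have hd : ((Polynomial.hasseDeriv b) Q).natDegree < N - b + 1 := by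
      have h1 := Polynomial.natDegree_hasseDeriv_le Q b
      omega
    rw [Polynomial.eval_eq_sum_range' hd]
    apply Finset.sum_congr rfl
    intro j _
    rw [Polynomial.hasseDeriv_coeff]
  rw [htay, Finset.sum_range_succ']
  simp only [Nat.zero_add, Nat.choose_self, Nat.cast_one, one_mul, pow_zero, mul_one]
  rw [add_sub_cancel_right, Finset.sum_mul]
  simp only [zero_mul, mul_zero, add_zero]
  apply Finset.sum_congr rfl
  intro j _
  rw [heS]
  have hfact : ((b + (j+1)).choose b : ℂ) * b.factorial * (j+1).factorial = (b + (j+1)).factorial := by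
    norm_cast
    have hnat := Nat.add_choose_mul_factorial_mul_factorial (j+1) b
    rw [add_comm (j+1) b] at hnat
    rw [mul_right_comm]
    exact hnat
  have h1 : (j + 1 + b) = b + (j + 1) := by omega
  rw [h1]
  have hb0 : (b.factorial : ℂ) ≠ 0 := Nat.cast_ne_zero.2 (Nat.factorial_ne_zero b)
  have hj0 : ((j+1).factorial : ℂ) ≠ 0 := Nat.cast_ne_zero.2 (Nat.factorial_ne_zero (j+1))
  field_simp
  rw [← hfact]
  ring

lemma aux_poly_diff (k : ℕ) (a : ℂ) :
    (Polynomial.taylor a ((X : ℂ[X]) ^ k * (X - C a) ^ k)) - X ^ k * (X - C a) ^ k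
      = ∑ m ∈ Finset.range (k+1),
          Polynomial.C ((k.choose m : ℂ) * (a^(k-m) - (-a)^(k-m))) * X ^ (k+m) := by
  rw [taylor_apply, mul_comp, pow_comp, pow_comp, X_comp, sub_comp, X_comp, C_comp]
  have h1 : ((X : ℂ[X]) + C a - C a) = X := by ring
  rw [h1]
  have h2 : ∀ c : ℂ, ((X : ℂ[X]) + C c) ^ k = ∑ m ∈ Finset.range (k+1),
      C ((k.choose m : ℂ) * c^(k-m)) * X ^ m := by
    intro c
    rw [add_pow]
    apply Finset.sum_congr rfl
    intro m _
    rw [← C_pow]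
    simp only [← C_eq_natCast, C_mul]
    ring
  have h3 : ((X : ℂ[X]) - C a) ^ k = ∑ m ∈ Finset.range (k+1),
      C ((k.choose m : ℂ) * (-a)^(k-m)) * X ^ m := by
    rw [sub_eq_add_neg, ← C_neg, h2 (-a)]
  rw [h2 a, h3, Finset.sum_mul, Finset.mul_sum, ← Finset.sum_sub_distrib]
  apply Finset.sum_congr rfl
  intro m _
  rw [pow_add]
  simp only [C_mul, C_sub]
  ring

lemma aux_reflect (F : ℕ) (hF : 3 ≤ F) (f : ℕ → ℂ) (h0 : f 0 = 0)
    (hmid : ∀ r, 2*r = F → f r = 0)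
    (hrefl : ∀ r, 1 ≤ r → r < F → f (F - r) = f r) :
    ∑ r ∈ Finset.range F, f r = 2 * ∑ r ∈ Finset.range ((F+1)/2), f r := by
  set h := (F+1)/2 with hh
  have h1F : (1:ℕ) ≤ h := by omega
  have hhF : h ≤ F := by omega
  have e1 : ∑ r ∈ Finset.range F, f r
      = ∑ r ∈ Finset.Ico 0 h, f r + ∑ r ∈ Finset.Ico h F, f r := by
    rw [Finset.sum_Ico_consecutive f (Nat.zero_le h) hhF, ← Finset.range_eq_Ico]
  have e2 : ∑ r ∈ Finset.Ico h F, f r = ∑ r ∈ Finset.Ico 1 (F/2+1), f r := by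
    apply Finset.sum_nbij' (i := fun r => F - r) (j := fun r => F - r)
    · intro r hr; simp only [Finset.mem_Ico] at hr ⊢; omega
    · intro r hr; simp only [Finset.mem_Ico] at hr ⊢; omega
    · intro r hr; simp only [Finset.mem_Ico] at hr; omega
    · intro r hr; simp only [Finset.mem_Ico] at hr; omega
    · intro r hr
      simp only [Finset.mem_Ico] at hr
      exact (hrefl r (by omega) (by omega)).symm
  have e3 : ∑ r ∈ Finset.Ico 1 (F/2+1), f r
      = ∑ r ∈ Finset.Ico 1 h, f r + ∑ r ∈ Finset.Ico h (F/2+1), f r := by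
    rw [Finset.sum_Ico_consecutive f h1F (by omega)]
  have e4 : ∑ r ∈ Finset.Ico h (F/2+1), f r = 0 := by
    apply Finset.sum_eq_zero
    intro r hr
    simp only [Finset.mem_Ico] at hr
    exact hmid r (by omega)
  have e5 : ∑ r ∈ Finset.Ico 0 h, f r = ∑ r ∈ Finset.Ico 1 h, f r := by
    rw [← Finset.sum_Ico_consecutive f (Nat.zero_le 1) h1F]
    have : ∑ r ∈ Finset.Ico 0 1, f r = 0 := by simp [h0]
    rw [this, zero_add]
  have e6 : ∑ r ∈ Finset.range h, f r = ∑ r ∈ Finset.Ico 0 h, f r := by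
    rw [Finset.range_eq_Ico]
  rw [e1, e2, e3, e4, e5, e6, e5]
  ring
lemma aux_right2 (k : ℕ) (hk : 1 ≤ k) (a : ℂ) (B : ℕ → ℂ) :
    ∑ b ∈ Finset.range (2*k+1),
        ((Polynomial.taylor a ((X : ℂ[X])^k * (X - C a)^k)).coeff b
          - ((X : ℂ[X])^k * (X - C a)^k).coeff b) * B b
      = 2 * a * ∑ j ∈ Finset.range ((k-1)/2+1),
          (k.choose (2*j+1) : ℂ) * a^(2*j) * B (2*k-1-2*j) := by
  have hco : ∀ b : ℕ, ((Polynomial.taylor a ((X : ℂ[X])^k * (X - C a)^k)).coeff b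
        - ((X : ℂ[X])^k * (X - C a)^k).coeff b)
      = ∑ m ∈ Finset.range (k+1),
          (k.choose m : ℂ) * (a^(k-m) - (-a)^(k-m)) * (if b = k + m then 1 else 0) := by
    intro b
    rw [← Polynomial.coeff_sub, aux_poly_diff, Polynomial.finset_sum_coeff]
    apply Finset.sum_congr rfl
    intro m _
    rw [Polynomial.coeff_C_mul, Polynomial.coeff_X_pow]
  simp_rw [hco, Finset.sum_mul]
  rw [Finset.sum_comm]
  have hpick : ∀ m ∈ Finset.range (k+1),
      ∑ b ∈ Finset.range (2*k+1),
        (k.choose m : ℂ) * (a^(k-m) - (-a)^(k-m)) * (if b = k + m then 1 else 0) * B b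
      = (k.choose m : ℂ) * (a^(k-m) - (-a)^(k-m)) * B (k+m) := by
    intro m hm
    simp only [Finset.mem_range] at hm
    rw [Finset.sum_eq_single (k+m)]
    · simp
    · intro b _ hb
      simp [hb]
    · intro h
      exfalso; apply h; simp only [Finset.mem_range]; omega
  rw [Finset.sum_congr rfl hpick]
  -- reflect: m = k - t
  rw [← Finset.sum_range_reflect]
  simp only [Nat.add_sub_cancel]
  have hstep : ∀ t ∈ Finset.range (k+1),
      (k.choose (k - t) : ℂ) * (a ^ (k - (k - t)) - (-a) ^ (k - (k - t))) * B (k + (k - t))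
      = (k.choose t : ℂ) * (a^t - (-a)^t) * B (2*k - t) := by
    intro t ht
    simp only [Finset.mem_range] at ht
    have h1 : k - (k - t) = t := by omega
    have h2 : k + (k - t) = 2*k - t := by omega
    rw [h1, h2, Nat.choose_symm (by omega : t ≤ k)]
  rw [Finset.sum_congr rfl hstep]
  have hne : ∀ t ∈ Finset.range (k+1),
      (k.choose t : ℂ) * (a^t - (-a)^t) * B (2*k - t) ≠ 0 → t % 2 = 1 := by
    intro t _ h
    by_contra hcon
    apply h
    have hev : Even t := Nat.even_iff.mpr (by omega)
    rw [hev.neg_pow, sub_self]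
    ring
  rw [← Finset.sum_filter_of_ne hne, Finset.mul_sum]
  apply Finset.sum_nbij' (i := fun t => t / 2) (j := fun j => 2 * j + 1)
  · intro t ht
    simp only [Finset.mem_filter, Finset.mem_range] at ht ⊢
    omega
  · intro j hj
    simp only [Finset.mem_range] at hj
    simp only [Finset.mem_filter, Finset.mem_range]
    omega
  · intro t ht
    simp only [Finset.mem_filter, Finset.mem_range] at ht
    omega
  · intro j hj
    omega
  · intro t ht
    simp only [Finset.mem_filter, Finset.mem_range] at ht
    rw [show t = 2 * (t / 2) + 1 from by omega]
    have e2 : 2*k - (2*(t/2)+1) = 2*k - 1 - 2*((2*(t/2)+1)/2) := by omega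
    have e3 : (2*(t/2)+1)/2 = t/2 := by omega
    rw [e2, e3, Odd.neg_pow (odd_two_mul_add_one _), pow_succ]
    ring

lemma aux_alg (n : ℕ) (c d x y : ℂ) :
    (-c) * (d * (y - x)^n * ((y - x) - y)^n * (2*(y-x) - y))
      = c * (d * x^n * (x - y)^n * (2*x - y)) := by
  rw [show (y - x) - y = -x by ring, show x - y = -(y - x) by ring]
  rw [neg_pow (y-x) n, neg_pow x n]
  ring

lemma aux_alg2 (n : ℕ) (c d x y : ℂ) :
    c * (d * x^n * (x - y)^n * (2*x - y))
      = (-1:ℂ)^(n+1) * d * (c * x^n * (y - x)^n * (y - 2*x)) := by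
  rw [show x - y = -(y - x) by ring, show 2*x - y = -(y - 2*x) by ring]
  rw [neg_pow (y-x) n, pow_succ]
  ring

end AuxLemmas

/-- for a nontrivial primitive *odd* character `χ` of conductor `F` and `k ≥ 1`,
`∑_{0≤j≤(k−1)/2} C(k,2j+1)·F^{2j}·B_{2k−1−2j}(χ)
  = ((−1)^k·k/F)·∑_{0≤r<F/2} χ(r)·r^{k−1}·(F−r)^{k−1}·(F−2r)`.
(The condition `r < F/2` on natural numbers is `2r < F`, i.e. `r < (F+1)/2`.) -/
theorem bernoulliChar_recursion_odd
    (F : ℕ) [NeZero F] (χ : DirichletCharacter ℂ F) (hχ : χ.IsPrimitive)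
    (hχ1 : χ ≠ 1) (hχodd : χ (-1) = -1)
    (k : ℕ) (hk : 1 ≤ k) (B : ℕ → ℂ) (hB : IsBernoulliChar χ B) :
    ∑ j ∈ Finset.range ((k - 1) / 2 + 1),
        (k.choose (2 * j + 1) : ℂ) * (F : ℂ) ^ (2 * j) * B (2 * k - 1 - 2 * j)
      = ((-1 : ℂ) ^ k * (k : ℂ) / (F : ℂ)) *
          ∑ r ∈ Finset.range ((F + 1) / 2),
            χ (r : ZMod F) * (r : ℂ) ^ (k - 1) * ((F : ℂ) - (r : ℂ)) ^ (k - 1) *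
              ((F : ℂ) - 2 * (r : ℂ)) := by
  classical
  obtain ⟨n, rfl⟩ : ∃ n, k = n + 1 := ⟨k - 1, by omega⟩
  have hF3 : 3 ≤ F := by
    by_contra hcon
    push_neg at hcon
    interval_cases F
    · exact absurd rfl (NeZero.ne 0)
    · have h1 : (-1 : ZMod 1) = 1 := Subsingleton.elim _ _
      rw [h1, map_one] at hχodd
      norm_num at hχodd
    · have h1 : (-1 : ZMod 2) = 1 := by decide
      rw [h1, map_one] at hχodd
      norm_num at hχodd
  have hF0 : (F:ℂ) ≠ 0 := Nat.cast_ne_zero.mpr (NeZero.ne F)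
  haveI : Fact (1 < F) := ⟨by omega⟩
  have hχ0 : χ (0 : ZMod F) = 0 := by
    apply MulChar.map_nonunit
    simp [isUnit_zero_iff]
  have hneg : ∀ r : ℕ, r ≤ F → χ (((F - r : ℕ) : ZMod F)) = - χ ((r : ℕ) : ZMod F) := by
    intro r hr
    have hcast : ((F - r : ℕ) : ZMod F) = - ((r : ℕ) : ZMod F) := by
      have h1 : ((F - r : ℕ) : ZMod F) = ((F : ℕ) : ZMod F) - ((r : ℕ) : ZMod F) := by
        push_cast [Nat.cast_sub hr]
        ring
      rw [h1, ZMod.natCast_self]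
      ring
    rw [hcast, ← neg_one_mul, map_mul, hχodd, neg_one_mul]
  set Q : Polynomial ℂ :=
    Polynomial.X ^ (n+1) * (Polynomial.X - Polynomial.C (F : ℂ)) ^ (n+1) with hQdef
  have hQdeg : Q.natDegree ≤ 2*(n+1) := by
    rw [hQdef]
    refine le_trans Polynomial.natDegree_mul_le ?_
    have h1 : ((Polynomial.X : Polynomial ℂ) ^ (n+1)).natDegree = n+1 :=
      Polynomial.natDegree_X_pow _
    have h2 : (((Polynomial.X : Polynomial ℂ) - Polynomial.C (F:ℂ)) ^ (n+1)).natDegree ≤ n+1 := by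
      refine le_trans (Polynomial.natDegree_pow_le) ?_
      rw [Polynomial.natDegree_X_sub_C]
      omega
    omega
  have hB' : PowerSeries.X *
      ∑ r ∈ Finset.range F, PowerSeries.C (χ (r : ZMod F)) *
        PowerSeries.rescale (r : ℂ) (PowerSeries.exp ℂ)
    = (PowerSeries.rescale (F : ℂ) (PowerSeries.exp ℂ) - 1) *
        PowerSeries.mk (fun m => B m / m.factorial) := hB
  have key : ∑ i ∈ Finset.range (2*(n+1)+1), Q.coeff i * i.factorial *
        (PowerSeries.coeff (R := ℂ) i) (PowerSeries.X *
          ∑ r ∈ Finset.range F, PowerSeries.C (χ (r : ZMod F)) *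
            PowerSeries.rescale (r : ℂ) (PowerSeries.exp ℂ))
      = ∑ i ∈ Finset.range (2*(n+1)+1), Q.coeff i * i.factorial *
        (PowerSeries.coeff (R := ℂ) i) ((PowerSeries.rescale (F:ℂ) (PowerSeries.exp ℂ) - 1) *
          PowerSeries.mk (fun m => B m / m.factorial)) := by
    apply Finset.sum_congr rfl
    intro i _
    rw [hB']
  have hL : ∑ i ∈ Finset.range (2*(n+1)+1), Q.coeff i * i.factorial *
        (PowerSeries.coeff (R := ℂ) i) (PowerSeries.X *
          ∑ r ∈ Finset.range F, PowerSeries.C (χ (r : ZMod F)) *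
            PowerSeries.rescale (r : ℂ) (PowerSeries.exp ℂ))
      = ∑ r ∈ Finset.range F, χ (r : ZMod F) *
          Polynomial.eval (r : ℂ) (Polynomial.derivative Q) := by
    have hswap : PowerSeries.X *
        (∑ r ∈ Finset.range F, PowerSeries.C (χ (r : ZMod F)) *
          PowerSeries.rescale (r : ℂ) (PowerSeries.exp ℂ))
        = ∑ r ∈ Finset.range F, PowerSeries.C (χ (r : ZMod F)) *
            (PowerSeries.X * PowerSeries.rescale (r : ℂ) (PowerSeries.exp ℂ)) := by
      rw [Finset.mul_sum]
      exact Finset.sum_congr rfl fun r _ => by ring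
    calc ∑ i ∈ Finset.range (2*(n+1)+1), Q.coeff i * i.factorial *
          (PowerSeries.coeff (R := ℂ) i) (PowerSeries.X *
            ∑ r ∈ Finset.range F, PowerSeries.C (χ (r : ZMod F)) *
              PowerSeries.rescale (r : ℂ) (PowerSeries.exp ℂ))
        = ∑ i ∈ Finset.range (2*(n+1)+1), ∑ r ∈ Finset.range F,
            Q.coeff i * i.factorial *
              (χ (r : ZMod F) * (PowerSeries.coeff (R := ℂ) i)
                (PowerSeries.X * PowerSeries.rescale (r : ℂ) (PowerSeries.exp ℂ))) := by
          apply Finset.sum_congr rfl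
          intro i _
          rw [hswap, map_sum, Finset.mul_sum]
          exact Finset.sum_congr rfl fun r _ => by rw [PowerSeries.coeff_C_mul]
      _ = ∑ r ∈ Finset.range F, ∑ i ∈ Finset.range (2*(n+1)+1),
            Q.coeff i * i.factorial *
              (χ (r : ZMod F) * (PowerSeries.coeff (R := ℂ) i)
                (PowerSeries.X * PowerSeries.rescale (r : ℂ) (PowerSeries.exp ℂ))) :=
          Finset.sum_comm
      _ = ∑ r ∈ Finset.range F, χ (r : ZMod F) *
            Polynomial.eval (r : ℂ) (Polynomial.derivative Q) := by
          apply Finset.sum_congr rfl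
          intro r _
          rw [← aux_left (2*(n+1)) (by omega) Q hQdeg (r : ℂ), Finset.mul_sum]
          exact Finset.sum_congr rfl fun i _ => by ring
  set f : ℕ → ℂ := fun r => χ ((r : ℕ) : ZMod F) *
      (((n:ℂ)+1) * (r:ℂ)^n * ((r:ℂ) - (F:ℂ))^n * (2*(r:ℂ) - (F:ℂ))) with hf
  have hL2 : ∀ r : ℕ, χ ((r : ℕ) : ZMod F) *
      Polynomial.eval (r : ℂ) (Polynomial.derivative Q) = f r := by
    intro r
    simp only [hf, hQdef, aux_deriv_eval n (F:ℂ) (r:ℂ)]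
  have hf0 : f 0 = 0 := by
    simp [hf, hχ0]
  have hmid : ∀ r, 2*r = F → f r = 0 := by
    intro r hr
    have h2 : 2*(r:ℂ) - (F:ℂ) = 0 := by
      have h3 := congrArg (fun m : ℕ => (m:ℂ)) hr
      push_cast at h3
      linear_combination h3
    simp [hf, h2]
  have hrefl : ∀ r, 1 ≤ r → r < F → f (F - r) = f r := by
    intro r h1 h2
    simp only [hf]
    rw [hneg r (by omega)]
    have hcast : ((F - r : ℕ) : ℂ) = (F:ℂ) - (r:ℂ) := by
      push_cast [Nat.cast_sub (by omega : r ≤ F)]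
      ring
    rw [hcast]
    exact aux_alg n (χ ((r : ℕ) : ZMod F)) ((n:ℂ)+1) (r:ℂ) (F:ℂ)
  have hRefl := aux_reflect F hF3 f hf0 hmid hrefl
  have hR := aux_right (2*(n+1)) Q hQdeg (F:ℂ) B
  have hR2 := aux_right2 (n+1) (by omega) (F:ℂ) B
  rw [← hQdef] at hR2
  have main : 2 * ∑ r ∈ Finset.range ((F+1)/2), f r
      = 2 * (F:ℂ) * ∑ j ∈ Finset.range (((n+1)-1)/2+1),
          ((n+1).choose (2*j+1) : ℂ) * (F:ℂ)^(2*j) * B (2*(n+1)-1-2*j) := by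
    calc 2 * ∑ r ∈ Finset.range ((F+1)/2), f r
        = ∑ r ∈ Finset.range F, f r := hRefl.symm
      _ = ∑ r ∈ Finset.range F, χ (r : ZMod F) *
            Polynomial.eval (r : ℂ) (Polynomial.derivative Q) :=
          Finset.sum_congr rfl fun r _ => (hL2 r).symm
      _ = _ := hL.symm
      _ = _ := key
      _ = _ := hR
      _ = _ := hR2
  have hfg : ∀ r : ℕ, f r = (-1:ℂ)^(n+1) * ((n:ℂ)+1) *
      (χ ((r : ℕ) : ZMod F) * (r:ℂ)^n * ((F:ℂ) - (r:ℂ))^n * ((F:ℂ) - 2*(r:ℂ))) := by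
    intro r
    simp only [hf]
    exact aux_alg2 n (χ ((r : ℕ) : ZMod F)) ((n:ℂ)+1) (r:ℂ) (F:ℂ)
  have hsum : ∑ r ∈ Finset.range ((F+1)/2), f r
      = (-1:ℂ)^(n+1) * ((n:ℂ)+1) * ∑ r ∈ Finset.range ((F+1)/2),
          χ ((r : ℕ) : ZMod F) * (r:ℂ)^n * ((F:ℂ) - (r:ℂ))^n * ((F:ℂ) - 2*(r:ℂ)) := by
    rw [Finset.mul_sum]
    exact Finset.sum_congr rfl fun r _ => hfg r
  rw [hsum] at main
  simp only [Nat.add_sub_cancel] at main ⊢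
  rw [div_mul_eq_mul_div, eq_div_iff hF0]
  push_cast at main ⊢
  linear_combination (-(1:ℂ)/2) * main
end

section
/- Let χ be a primitive Dirichlet character of conductor F and let k ≥ 1 be an integer with χ(−1) = (−1)^k. Then L(χ,1−k) = (2·(k−1)!·F^k / ((−2πi)^k · g(χ̄)))·L(χ̄,k), where g(χ̄) = Σ_{0≤r<F} χ̄(r)·e^{2πir/F} is the Gauss sum of the conjugate character χ̄; moreover |g(χ̄)| = F^{1/2}. -/
open scoped Classical

open Complex

section Aux

variable {N : ℕ} [NeZero N]

private lemma myLFunction_const_mul (a : ℂ) (Φ : ZMod N → ℂ) (s : ℂ) :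
    ZMod.LFunction (fun j => a * Φ j) s = a * ZMod.LFunction Φ s := by
  simp only [ZMod.LFunction, Finset.mul_sum, mul_assoc, mul_comm, mul_left_comm]

private lemma my_inv_eq_conj (χ : DirichletCharacter ℂ N) :
    χ⁻¹ = χ.ringHomComp (starRingEnd ℂ) := by
  have h : χ * χ.ringHomComp (starRingEnd ℂ) = 1 := by
    ext a
    have hn : ‖χ a‖ = 1 := DirichletCharacter.unit_norm_eq_one χ a
    simp only [MulChar.mul_apply, MulChar.one_apply_coe, MulChar.ringHomComp_apply]
    rw [Complex.mul_conj, Complex.normSq_eq_norm_sq, hn]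
    norm_num
  exact (eq_inv_of_mul_eq_one_right h).symm

private lemma my_gauss_inv (χ : MulChar (ZMod N) ℂ) (ψ : AddChar (ZMod N) ℂ) :
    χ (-1) * gaussSum χ ψ⁻¹ = gaussSum χ ψ := by
  simp only [gaussSum, Finset.mul_sum, AddChar.inv_apply]
  refine Fintype.sum_equiv (Equiv.neg _) _ _ fun a => ?_
  simp only [Equiv.neg_apply, neg_neg, ← mul_assoc, ← map_mul, neg_mul, neg_neg, one_mul]

private lemma my_card {χ : DirichletCharacter ℂ N} (hχ : χ.IsPrimitive) :
    gaussSum χ ZMod.stdAddChar * gaussSum χ⁻¹ ZMod.stdAddChar⁻¹ = N := by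
  have h := congrFun (ZMod.dft_dft (⇑χ)) (-1)
  rw [funext (hχ.fourierTransform_eq_inv_mul_gaussSum)] at h
  rw [ZMod.dft_apply] at h
  simp only [neg_neg, smul_eq_mul, map_one, mul_one, Circle.smul_def, mul_neg, neg_mul] at h
  calc gaussSum χ ZMod.stdAddChar * gaussSum χ⁻¹ ZMod.stdAddChar⁻¹
      = ∑ x : ZMod N, (ZMod.stdAddChar x : ℂ) * (χ⁻¹ (-x) * gaussSum χ ZMod.stdAddChar) := by
        rw [mul_comm, gaussSum, Finset.sum_mul]
        refine Fintype.sum_equiv (Equiv.neg _) _ _ fun a => ?_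
        simp only [Equiv.neg_apply, neg_neg, AddChar.inv_apply, ZMod.stdAddChar_apply]
        ring
    _ = N := by simpa using h

private lemma my_gauss_sum_eq (χbar : DirichletCharacter ℂ N) :
    (∑ r ∈ Finset.range N, χbar (r : ZMod N) * Complex.exp (2 * Real.pi * Complex.I * r / N))
      = gaussSum χbar ZMod.stdAddChar := by
  rw [gaussSum]
  refine Finset.sum_nbij' (fun r => (r : ZMod N)) (fun a => a.val) ?_ ?_ ?_ ?_ ?_
  · intro r _; exact Finset.mem_univ _
  · intro a _; exact Finset.mem_range.mpr a.val_lt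
  · intro r hr; exact ZMod.val_natCast_of_lt (Finset.mem_range.mp hr)
  · intro a _; exact ZMod.natCast_zmod_val a
  · intro r hr
    rw [ZMod.stdAddChar_apply, ZMod.toCircle_natCast]

private lemma my_conj_stdAddChar (a : ZMod N) :
    (starRingEnd ℂ) (ZMod.stdAddChar a) = ZMod.stdAddChar (-a) := by
  have h1 : (ZMod.stdAddChar a : ℂ) * ZMod.stdAddChar (-a) = 1 := by
    rw [← AddChar.map_add_eq_mul, add_neg_cancel, AddChar.map_zero_eq_one]
  have h2 : ‖(ZMod.stdAddChar a : ℂ)‖ = 1 := by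
    rw [ZMod.stdAddChar_apply]; exact Circle.norm_coe _
  rw [← Complex.inv_eq_conj h2]
  exact inv_eq_of_mul_eq_one_right h1

end Aux

/-- the complete functional equation in the form
`L(χ,1−k) = (2·(k−1)!·F^k / ((−2πi)^k · g(χ̄)))·L(χ̄,k)`, where
`g(χ̄) = ∑_{0≤r<F} χ̄(r)·e^{2πir/F}` is the Gauss sum of the conjugate character `χ̄`;
moreover `|g(χ̄)| = F^{1/2}`. -/
theorem LFunction_one_sub_eq_functional_equation
    (F : ℕ) [NeZero F] (χ : DirichletCharacter ℂ F) (hχ : χ.IsPrimitive)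
    (k : ℕ) (hk : 1 ≤ k) (hpar : χ (-1) = (-1) ^ k)
    (χbar : DirichletCharacter ℂ F) (hχbar : χbar = χ.ringHomComp (starRingEnd ℂ))
    (g : ℂ)
    (hg : g = ∑ r ∈ Finset.range F,
        χbar (r : ZMod F) * Complex.exp (2 * Real.pi * Complex.I * r / F)) :
    χ.LFunction (1 - (k : ℂ)) =
        (2 * (k - 1).factorial * (F : ℂ) ^ k / ((-(2 * Real.pi * Complex.I)) ^ k * g)) *
          χbar.LFunction (k : ℂ)
      ∧ ‖g‖ = Real.sqrt F := by
  have hinv : χ⁻¹ = χbar := by rw [my_inv_eq_conj, hχbar]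
  have hgB : g = gaussSum χbar ZMod.stdAddChar := by rw [hg, my_gauss_sum_eq]
  set gχ := gaussSum χ ZMod.stdAddChar with hgχ
  have hA : ((-1 : ℂ)) ^ k * ((-1 : ℂ)) ^ k = 1 := by
    rw [← mul_pow]; norm_num
  -- χ⁻¹ (-1) = (-1)^k
  have hparinv : χ⁻¹ (-1) = (-1 : ℂ) ^ k := by
    rw [hinv, hχbar, MulChar.ringHomComp_apply, hpar]
    rw [map_pow, map_neg, map_one]
  -- gauss sum with inverse addchar
  have hplus : gaussSum χ⁻¹ ZMod.stdAddChar⁻¹ = (-1 : ℂ) ^ k * g := by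
    have h := my_gauss_inv (χ⁻¹ : DirichletCharacter ℂ F) ZMod.stdAddChar
    rw [hparinv] at h
    rw [show gaussSum χ⁻¹ ZMod.stdAddChar = g by rw [hinv, ← hgB]] at h
    linear_combination ((-1:ℂ)^k) * h - gaussSum χ⁻¹ ZMod.stdAddChar⁻¹ * hA
  have hCmul : gχ * g = (-1 : ℂ) ^ k * (F : ℂ) := by
    have h := my_card hχ
    rw [hplus] at h
    linear_combination ((-1:ℂ)^k) * h - gχ * g * hA
  -- conjugate of g
  have hconj : (starRingEnd ℂ) g = (-1 : ℂ) ^ k * gχ := by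
    have h1 : (starRingEnd ℂ) g = gaussSum χ ZMod.stdAddChar⁻¹ := by
      rw [hgB, gaussSum, map_sum, gaussSum]
      refine Finset.sum_congr rfl fun a _ => ?_
      rw [map_mul, my_conj_stdAddChar, hχbar, MulChar.ringHomComp_apply,
        Complex.conj_conj, AddChar.inv_apply]
    have h2 := my_gauss_inv (χ : MulChar (ZMod F) ℂ) ZMod.stdAddChar
    rw [hpar] at h2
    rw [h1]
    linear_combination ((-1:ℂ)^k) * h2 - gaussSum χ ZMod.stdAddChar⁻¹ * hA
  -- |g| = sqrt F
  have habs : ‖g‖ = Real.sqrt F := by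
    have h : (Complex.normSq g : ℂ) = (F : ℂ) := by
      rw [← Complex.mul_conj, hconj]
      calc g * ((-1:ℂ)^k * gχ) = (-1:ℂ)^k * (gχ * g) := by ring
        _ = (-1:ℂ)^k * ((-1:ℂ)^k * (F:ℂ)) := by rw [hCmul]
        _ = (F : ℂ) := by rw [← mul_assoc, hA, one_mul]
    have h' : Complex.normSq g = (F : ℝ) := by exact_mod_cast h
    rw [Complex.norm_def, h']
  refine ⟨?_, habs⟩
  -- nonvanishing
  have hg0 : g ≠ 0 := by
    intro h0
    rw [h0, norm_zero] at habs
    have : (0:ℝ) < Real.sqrt F := Real.sqrt_pos.mpr (by exact_mod_cast (NeZero.pos F))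
    exact this.ne habs
  have hF0 : (F : ℂ) ≠ 0 := Nat.cast_ne_zero.mpr (NeZero.ne F)
  -- hypotheses for LFunction_one_sub
  have hs : ∀ n : ℕ, (k : ℂ) ≠ -n := by
    intro n h
    have := congrArg Complex.re h
    simp only [Complex.natCast_re, Complex.neg_re] at this
    have h1 : (1:ℝ) ≤ (k:ℝ) := by exact_mod_cast hk
    have h2 : (0:ℝ) ≤ (n:ℝ) := Nat.cast_nonneg n
    linarith
  have hs' : (⇑χ) 0 = 0 ∨ (k : ℂ) ≠ 1 := by
    rcases eq_or_ne F 1 with rfl | hF1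
    · right
      have hke : Even k := by
        have : ((-1 : ℂ)) ^ k = 1 := by
          rw [← hpar]
          have : (-1 : ZMod 1) = 1 := Subsingleton.elim _ _
          rw [this, map_one]
        rcases Nat.even_or_odd k with he | ho
        · exact he
        · rw [Odd.neg_one_pow ho] at this; norm_num at this
      intro h
      have : k = 1 := by exact_mod_cast h
      rw [this] at hke
      norm_num at hke
    · left; exact χ.map_zero' hF1
  have hFE := ZMod.LFunction_one_sub (⇑χ) hs hs'
  -- compute the two Fourier-transformed L-functions
  have hdft1 : ZMod.LFunction (ZMod.dft (⇑χ)) (k : ℂ)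
      = ((-1:ℂ)^k * gχ) * ZMod.LFunction (⇑χbar) (k : ℂ) := by
    have he : ZMod.dft (⇑χ) = fun j => ((-1:ℂ)^k * gχ) * χbar j := by
      funext j
      rw [hχ.fourierTransform_eq_inv_mul_gaussSum, ← hgχ, show (-j : ZMod F) = -1 * j by ring,
        map_mul, hparinv, hinv]
      ring
    rw [he, myLFunction_const_mul]
  have hdft2 : ZMod.LFunction (ZMod.dft (fun x => χ (-x))) (k : ℂ)
      = gχ * ZMod.LFunction (⇑χbar) (k : ℂ) := by
    have he : ZMod.dft (fun x => (⇑χ) (-x)) = fun j => gχ * χbar j := by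
      funext j
      rw [congrFun (ZMod.dft_comp_neg (⇑χ)) j, hχ.fourierTransform_eq_inv_mul_gaussSum,
        neg_neg, ← hgχ, hinv]
      ring
    rw [he, myLFunction_const_mul]
  -- exponentials
  have hexp1 : Complex.exp (↑Real.pi * Complex.I * (k:ℂ) / 2) = Complex.I ^ k := by
    rw [show (↑Real.pi * Complex.I * (k:ℂ) / 2) = (k:ℕ) * (↑Real.pi * Complex.I / 2) by push_cast; ring,
      Complex.exp_nat_mul]
    congr 1
    rw [show (↑Real.pi * Complex.I / 2 : ℂ) = ↑(Real.pi/2) * Complex.I by push_cast; ring,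
      Complex.exp_mul_I, ← Complex.ofReal_cos, ← Complex.ofReal_sin,
      Real.cos_pi_div_two, Real.sin_pi_div_two]
    simp
  have hexp2 : Complex.exp (-↑Real.pi * Complex.I * (k:ℂ) / 2) = (-Complex.I) ^ k := by
    rw [show (-↑Real.pi * Complex.I * (k:ℂ) / 2) = (k:ℕ) * (-(↑Real.pi * Complex.I / 2)) by push_cast; ring,
      Complex.exp_nat_mul]
    congr 1
    rw [show (-(↑Real.pi * Complex.I / 2) : ℂ) = ↑(-(Real.pi/2)) * Complex.I by push_cast; ring,
      Complex.exp_mul_I, ← Complex.ofReal_cos, ← Complex.ofReal_sin]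
    simp [Real.cos_pi_div_two, Real.sin_pi_div_two]
  -- Gamma
  have hGamma : Complex.Gamma (k : ℂ) = ((k-1).factorial : ℂ) := by
    have : (k : ℂ) = ((k-1 : ℕ) : ℂ) + 1 := by
      push_cast [Nat.cast_sub hk]; ring
    rw [this, Complex.Gamma_nat_eq_factorial]
  -- powers
  have hNpow : (F : ℂ) ^ ((k:ℂ) - 1) = (F : ℂ) ^ k / F := by
    rw [Complex.cpow_sub _ _ hF0, Complex.cpow_natCast, Complex.cpow_one]
  have hPpow : ((2 * ↑Real.pi : ℂ)) ^ (-(k:ℂ)) = ((2 * ↑Real.pi : ℂ) ^ k)⁻¹ := by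
    rw [Complex.cpow_neg, Complex.cpow_natCast]
  have hP0 : ((2 * ↑Real.pi : ℂ)) ^ k ≠ 0 := by
    apply pow_ne_zero
    simp [Real.pi_ne_zero]
  have hD0 : ((-(2 * ↑Real.pi * Complex.I)) ^ k * g) ≠ 0 := by
    apply mul_ne_zero _ hg0
    apply pow_ne_zero
    simp [Real.pi_ne_zero, Complex.I_ne_zero]
  -- now assemble
  rw [show χ.LFunction (1 - (k:ℂ)) = ZMod.LFunction (⇑χ) (1 - (k:ℂ)) from rfl,
    show χbar.LFunction (k:ℂ) = ZMod.LFunction (⇑χbar) (k:ℂ) from rfl]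
  rw [hFE, hdft1, hdft2, hexp1, hexp2, hGamma, hNpow, hPpow]
  have hB : (Complex.I) ^ k * (Complex.I) ^ k = (-1:ℂ)^k := by
    rw [← mul_pow, Complex.I_mul_I]
  have hnegI : (-Complex.I) ^ k = (-1:ℂ)^k * Complex.I ^ k := by
    rw [neg_pow]
  have hnegD : (-(2 * ↑Real.pi * Complex.I)) ^ k
      = (-1:ℂ)^k * ((2 * ↑Real.pi : ℂ) ^ k * Complex.I ^ k) := by
    rw [show (-(2 * ↑Real.pi * Complex.I) : ℂ) = (-1) * ((2 * ↑Real.pi) * Complex.I) by ring,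
      mul_pow, mul_pow]
  conv_rhs => rw [div_mul_eq_mul_div]
  rw [eq_div_iff hD0, hnegD, hnegI]
  set L := ZMod.LFunction (⇑χbar) (k:ℂ)
  field_simp
  linear_combination
    (2 * ((k-1).factorial:ℂ) * L * (((-1:ℂ)^k)^2 * (Complex.I^k)^2)) * hCmul
    + (2 * ((k-1).factorial:ℂ) * L * (((-1:ℂ)^k)^3 * (F:ℂ))) * hB
    + (2 * ((k-1).factorial:ℂ) * L * ((((-1:ℂ)^k)^2 + 1) * (F:ℂ))) * hA
end

section
/- Let χ be a primitive Dirichlet character of conductor F. Then as k → ∞ through positive integers with χ(−1) = (−1)^k, the ratio |L(χ,1−k)| / ( 2·e^{−1/2}·(kF/(2πe))^{k−1/2} ) tends to 1. -/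
open scoped Classical Topology

open Filter

section Helpers

open Complex ZMod DirichletCharacter Finset Topology
open scoped Real

variable {N : ℕ} [NeZero N]


lemma conj_gaussSum (χ : DirichletCharacter ℂ N) :
    (starRingEnd ℂ) (gaussSum χ stdAddChar) =
      ∑ j : ZMod N, stdAddChar j * χ⁻¹ (-j) := by
  rw [gaussSum, map_sum]
  refine Fintype.sum_equiv (Equiv.neg _) _ _ fun j ↦ ?_
  simp only [Equiv.neg_apply, neg_neg, map_mul]
  rw [mul_comm]
  congr 1
  · rw [stdAddChar_apply, stdAddChar_apply, AddChar.map_neg_eq_inv, Circle.coe_inv_eq_conj,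
      starRingEnd_apply, RCLike.star_def]
  · rw [starRingEnd_apply, MulChar.star_apply']

lemma gaussSum_mul_conj {χ : DirichletCharacter ℂ N} (hχ : χ.IsPrimitive) :
    gaussSum χ stdAddChar * (starRingEnd ℂ) (gaussSum χ stdAddChar) = N := by
  have h1 := congrFun (ZMod.dft_dft ((χ : ZMod N → ℂ))) (-1)
  rw [neg_neg, map_one, smul_eq_mul, mul_one] at h1
  rw [ZMod.dft_apply] at h1
  have h2 : ∀ j : ZMod N, stdAddChar (-(j * (-1))) • (𝓕 (χ : ZMod N → ℂ)) j
      = stdAddChar j * χ⁻¹ (-j) * gaussSum χ stdAddChar := by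
    intro j
    rw [hχ.fourierTransform_eq_inv_mul_gaussSum, mul_neg_one, neg_neg, smul_eq_mul, mul_assoc]
  rw [Finset.sum_congr rfl fun j _ ↦ h2 j, ← Finset.sum_mul] at h1
  rw [conj_gaussSum, mul_comm, h1]

lemma abs_gaussSum {χ : DirichletCharacter ℂ N} (hχ : χ.IsPrimitive) :
    ‖gaussSum χ stdAddChar‖ = Real.sqrt N := by
  have h := gaussSum_mul_conj hχ
  rw [Complex.mul_conj] at h
  have h' : Complex.normSq (gaussSum χ stdAddChar) = N := by exact_mod_cast h
  rw [Complex.norm_def, h']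


lemma tendsto_LFunction_atTop (χ : DirichletCharacter ℂ N) :
    Tendsto (fun k : ℕ ↦ χ.LFunction k) atTop (𝓝 1) := by
  have hC : Summable (fun n : ℕ ↦ (1:ℝ) / (n + 2) ^ 2) := by
    have := (summable_nat_add_iff (f := fun n : ℕ ↦ (1:ℝ) / n ^ 2) 2).mpr
      (Real.summable_one_div_nat_pow.mpr one_lt_two)
    exact this.congr fun n ↦ by push_cast; ring_nf
  set C : ℝ := ∑' n : ℕ, (1:ℝ) / (n + 2) ^ 2 with hCdef
  have key : ∀ k : ℕ, 2 ≤ k → ‖χ.LFunction k - 1‖ ≤ (2:ℝ) ^ ((2:ℝ) - k) * C := by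
    intro k hk
    have hre : 1 < ((k : ℂ)).re := by
      simp only [natCast_re]
      exact_mod_cast hk
    rw [χ.LFunction_eq_LSeries hre]
    set f : ℕ → ℂ := fun n ↦ LSeries.term (fun m : ℕ ↦ χ m) k n with hf
    have hsum : Summable f := ZMod.LSeriesSummable_of_one_lt_re (χ : ZMod N → ℂ) hre
    have hsum1 : Summable (fun n ↦ f (n + 1)) := (summable_nat_add_iff 1).mpr hsum
    have hsum2 : Summable (fun n ↦ f (n + 2)) := (summable_nat_add_iff 2).mpr hsum
    have h0 : f 0 = 0 := LSeries.term_zero _ _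
    have h1 : f 1 = 1 := by
      show LSeries.term (fun m : ℕ ↦ χ m) k 1 = 1
      rw [LSeries.term_of_ne_zero one_ne_zero]
      simp
    have hsplit : LSeries (fun m : ℕ ↦ χ m) k = 1 + ∑' n, f (n + 2) := by
      rw [LSeries, ← hf, hsum.tsum_eq_zero_add, h0, zero_add, hsum1.tsum_eq_zero_add, h1]
    rw [hsplit, add_sub_cancel_left]
    calc ‖∑' n, f (n + 2)‖ ≤ ∑' n, ‖f (n + 2)‖ := norm_tsum_le_tsum_norm hsum2.norm
      _ ≤ ∑' n : ℕ, (2:ℝ) ^ ((2:ℝ) - k) * (1 / (n + 2) ^ 2) := by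
          refine Summable.tsum_le_tsum (fun n ↦ ?_) hsum2.norm (hC.mul_left _)
          have hnorm : ‖f (n + 2)‖ ≤ ((n : ℝ) + 2) ^ (-(k:ℝ)) := by
            show ‖LSeries.term (fun m : ℕ ↦ χ m) k (n + 2)‖ ≤ _
            rw [LSeries.norm_term_eq, if_neg (by omega)]
            rw [Real.rpow_neg (by positivity), natCast_re]
            push_cast
            rw [div_eq_mul_inv]
            exact mul_le_of_le_one_left (by positivity)
              (by exact_mod_cast DirichletCharacter.norm_le_one χ ((n : ZMod N) + 2))
          refine hnorm.trans ?_
          have hbase : (0:ℝ) < (n : ℝ) + 2 := by positivity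
          have hs : ((n:ℝ) + 2) ^ (-(k:ℝ)) =
              ((n:ℝ) + 2) ^ ((2:ℝ) - k) * ((n:ℝ) + 2) ^ (-(2:ℝ)) := by
            rw [← Real.rpow_add hbase]; ring_nf
          rw [hs]
          have h1 : ((n:ℝ) + 2) ^ ((2:ℝ) - k) ≤ (2:ℝ) ^ ((2:ℝ) - k) :=
            Real.rpow_le_rpow_of_nonpos zero_lt_two (by linarith) (by
              have : (2:ℝ) ≤ (k:ℝ) := by exact_mod_cast hk
              linarith)
          have h2 : ((n:ℝ) + 2) ^ (-(2:ℝ)) = 1 / ((n:ℝ) + 2) ^ 2 := by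
            rw [Real.rpow_neg hbase.le, one_div, ← Real.rpow_natCast ((n:ℝ)+2) 2]
            norm_num
          rw [h2]
          exact mul_le_mul_of_nonneg_right h1 (by positivity)
      _ = (2:ℝ) ^ ((2:ℝ) - k) * C := tsum_mul_left
  have hbound : Tendsto (fun k : ℕ ↦ (2:ℝ) ^ ((2:ℝ) - k) * C) atTop (𝓝 0) := by
    have h4 : ∀ k : ℕ, (2:ℝ) ^ ((2:ℝ) - k) * C = (4 * C) * (1/2 : ℝ) ^ k := by
      intro k
      rw [Real.rpow_sub zero_lt_two, Real.rpow_natCast, Real.rpow_two]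
      rw [div_pow, one_pow]
      field_simp
      ring
    simp only [h4]
    rw [show (0:ℝ) = (4 * C) * 0 by ring]
    exact (tendsto_pow_atTop_nhds_zero_of_lt_one (by norm_num) (by norm_num)).const_mul _
  have hL : Tendsto (fun k : ℕ ↦ χ.LFunction k - 1) atTop (𝓝 0) := by
    apply squeeze_zero_norm' _ hbound
    filter_upwards [eventually_ge_atTop 2] with k hk using key k hk
  have := hL.add_const 1
  simpa using this

lemma LFunction_const_mul' (a : ℂ) (Φ : ZMod N → ℂ) (s : ℂ) :
    ZMod.LFunction (fun j ↦ a * Φ j) s = a * ZMod.LFunction Φ s := by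
  simp only [ZMod.LFunction, Finset.mul_sum]
  refine Finset.sum_congr rfl fun j _ ↦ ?_
  ring

lemma LFunction_one_sub_eq {χ : DirichletCharacter ℂ N} (hχ : χ.IsPrimitive)
    {k : ℕ} (hk : 2 ≤ k) (hpar : χ (-1) = (-1) ^ k) :
    χ.LFunction (1 - k) = (N : ℂ) ^ ((k : ℂ) - 1) * (2 * (π:ℝ) : ℂ) ^ (-(k:ℂ)) *
      Complex.Gamma k * (2 * (-1)^k * Complex.I^k) * gaussSum χ stdAddChar *
      χ⁻¹.LFunction k := by
  have hs : ∀ n : ℕ, (k : ℂ) ≠ -n := by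
    intro n hn
    have h2 : (k : ℝ) = -(n : ℝ) := by exact_mod_cast congrArg Complex.re hn
    have h3 : (0:ℝ) ≤ (n:ℝ) := Nat.cast_nonneg n
    have h4 : (2:ℝ) ≤ (k:ℝ) := by exact_mod_cast hk
    linarith
  have hs' : (χ : ZMod N → ℂ) 0 = 0 ∨ (k : ℂ) ≠ 1 := by
    right
    intro h
    have : k = 1 := by exact_mod_cast h
    omega
  have heq := ZMod.LFunction_one_sub (χ : ZMod N → ℂ) hs hs'
  have hF1 : 𝓕 (χ : ZMod N → ℂ) = fun j ↦ (χ⁻¹ (-1) * gaussSum χ stdAddChar) * χ⁻¹ j := by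
    funext j
    rw [hχ.fourierTransform_eq_inv_mul_gaussSum, ← neg_one_mul j, map_mul]
    ring
  have hF2 : 𝓕 (fun x : ZMod N ↦ (χ : ZMod N → ℂ) (-x)) =
      fun j ↦ (χ (-1) * χ⁻¹ (-1) * gaussSum χ stdAddChar) * χ⁻¹ j := by
    have : (fun x : ZMod N ↦ (χ : ZMod N → ℂ) (-x)) = fun x ↦ χ (-1) * χ x := by
      funext x
      rw [← neg_one_mul x, map_mul]
    rw [this, ZMod.dft_const_mul, hF1]
    funext j
    ring
  have hunit : χ (-1) * χ⁻¹ (-1) = 1 := by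
    rw [← MulChar.mul_apply, mul_inv_cancel, MulChar.one_apply isUnit_one.neg]
  have hinv : χ⁻¹ (-1) = (-1 : ℂ) ^ k := by
    rw [← MulChar.star_apply', hpar]
    simp
  have hL1 : ZMod.LFunction (𝓕 (χ : ZMod N → ℂ)) k =
      (-1:ℂ)^k * gaussSum χ stdAddChar * χ⁻¹.LFunction k := by
    rw [hF1, LFunction_const_mul', hinv]
    rfl
  have hL2 : ZMod.LFunction (𝓕 (fun x : ZMod N ↦ (χ : ZMod N → ℂ) (-x))) k =
      gaussSum χ stdAddChar * χ⁻¹.LFunction k := by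
    rw [hF2, LFunction_const_mul', hunit, one_mul]
    rfl
  have hexp1 : Complex.exp ((π:ℝ) * Complex.I * k / 2) = Complex.I ^ k := by
    have : ((π:ℝ) * Complex.I * k / 2 : ℂ) = k * ((π/2 : ℝ) * Complex.I) := by
      push_cast
      ring
    rw [this, Complex.exp_nat_mul, Complex.exp_mul_I]
    norm_num [Complex.cos_pi_div_two, Complex.sin_pi_div_two]
  have hexp2 : Complex.exp (-(π:ℝ) * Complex.I * k / 2) = (-Complex.I) ^ k := by
    have : (-(π:ℝ) * Complex.I * k / 2 : ℂ) = k * ((-(π/2) : ℝ) * Complex.I) := by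
      push_cast
      ring
    rw [this, Complex.exp_nat_mul, Complex.exp_mul_I]
    push_cast
    rw [Complex.cos_neg, Complex.sin_neg]
    norm_num [Complex.cos_pi_div_two, Complex.sin_pi_div_two]
  show ZMod.LFunction (χ : ZMod N → ℂ) (1 - k) = _
  rw [heq, hL1, hL2, hexp1, hexp2]
  have hneg : (-Complex.I) ^ k = (-1:ℂ)^k * Complex.I ^ k := by
    rw [← mul_pow]
    norm_num
  rw [hneg]
  show _ = _
  ring

lemma abs_LFunction_one_sub' {χ : DirichletCharacter ℂ N} (hχ : χ.IsPrimitive)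
    {k : ℕ} (hk : 2 ≤ k) (hpar : χ (-1) = (-1) ^ k) :
    ‖χ.LFunction (1 - k)‖ =
      2 * Real.sqrt N * (N:ℝ) ^ ((k:ℝ) - 1) * (2 * Real.pi) ^ (-(k:ℝ)) * (Nat.factorial (k - 1) : ℝ) *
        ‖χ⁻¹.LFunction k‖ := by
  rw [LFunction_one_sub_eq hχ hk hpar]
  rw [norm_mul, norm_mul, norm_mul, norm_mul, norm_mul]
  have hN : (0:ℝ) < N := by exact_mod_cast Nat.pos_of_ne_zero (NeZero.ne N)
  have h1 : ‖(N:ℂ) ^ ((k:ℂ) - 1)‖ = (N:ℝ) ^ ((k:ℝ) - 1) := by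
    rw [show (N:ℂ) = ((N:ℝ):ℂ) from (Complex.ofReal_natCast N).symm,
      Complex.norm_cpow_eq_rpow_re_of_pos hN]
    norm_num
  have h2 : ‖(2 * (π:ℝ) : ℂ) ^ (-(k:ℂ))‖ = (2 * Real.pi) ^ (-(k:ℝ)) := by
    rw [show (2 * (π:ℝ) : ℂ) = ((2 * Real.pi : ℝ):ℂ) by push_cast; ring,
      Complex.norm_cpow_eq_rpow_re_of_pos (by positivity)]
    norm_num
  have h3 : ‖Complex.Gamma k‖ = (Nat.factorial (k - 1) : ℝ) := by
    have hk1 : 1 ≤ k := by omega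
    have hkc : (k:ℂ) = ((k-1 : ℕ) : ℂ) + 1 := by
      push_cast [Nat.cast_sub hk1]
      ring
    rw [hkc, Complex.Gamma_nat_eq_factorial]
    exact Complex.norm_natCast _
  have h4 : ‖2 * (-1:ℂ)^k * Complex.I^k‖ = 2 := by
    rw [norm_mul, norm_mul, norm_pow, norm_pow]
    simp
  rw [h1, h2, h3, h4, abs_gaussSum hχ]
  ring

end Helpers

section StirlingHelper

open Real


lemma ratio_eq {N k : ℕ} (hN : 0 < N) (hk : 2 ≤ k) :
    (2 * Real.sqrt N * (N:ℝ) ^ ((k:ℝ) - 1) * (2 * Real.pi) ^ (-(k:ℝ)) *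
        (Nat.factorial (k-1) : ℝ)) /
      (2 * Real.exp (-(1/2)) * (((k:ℝ) * (N:ℝ)) / (2 * Real.pi * Real.exp 1)) ^ ((k:ℝ) - 1/2)) =
    Stirling.stirlingSeq k / Real.sqrt Real.pi := by
  have hn : (0:ℝ) < N := by exact_mod_cast hN
  have hk0 : 0 < k := by omega
  have hx : (0:ℝ) < k := by exact_mod_cast hk0
  have hpi : (0:ℝ) < π := Real.pi_pos
  have he : (0:ℝ) < Real.exp 1 := Real.exp_pos 1
  -- expand rpow into nat pow and square roots
  rw [Real.rpow_sub hn, Real.rpow_one, Real.rpow_natCast]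
  rw [Real.rpow_neg (by positivity), Real.rpow_natCast]
  rw [Real.rpow_sub (by positivity), Real.rpow_natCast, ← Real.sqrt_eq_rpow]
  rw [Real.exp_neg, Real.exp_half]
  rw [Stirling.stirlingSeq]
  -- decompose square roots
  rw [Real.sqrt_div (by positivity : (0:ℝ) ≤ (k:ℝ) * N),
    Real.sqrt_mul (le_of_lt hx) (N:ℝ),
    Real.sqrt_mul (by positivity : (0:ℝ) ≤ 2 * π) (Real.exp 1),
    Real.sqrt_mul (by norm_num : (0:ℝ) ≤ 2) π,
    Real.sqrt_mul (by norm_num : (0:ℝ) ≤ 2) (k:ℝ)]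
  have hfac : (Nat.factorial k : ℝ) = (k:ℝ) * (Nat.factorial (k-1) : ℝ) := by
    rw [← Nat.mul_factorial_pred hk0.ne']
    push_cast
    ring
  rw [hfac]
  set a := Real.sqrt N with ha
  set b := Real.sqrt π with hb
  set c := Real.sqrt (k:ℝ) with hc
  set d := Real.sqrt (Real.exp 1) with hd
  set s2 := Real.sqrt 2 with hs2
  have ha0 : 0 < a := Real.sqrt_pos.mpr hn
  have hb0 : 0 < b := Real.sqrt_pos.mpr hpi
  have hc0 : 0 < c := Real.sqrt_pos.mpr hx
  have hd0 : 0 < d := Real.sqrt_pos.mpr he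
  have hs20 : 0 < s2 := Real.sqrt_pos.mpr (by norm_num)
  have hNa : (N:ℝ) = a ^ 2 := (Real.sq_sqrt hn.le).symm
  have hkc : (k:ℝ) = c ^ 2 := (Real.sq_sqrt hx.le).symm
  have hpib : π = b ^ 2 := (Real.sq_sqrt hpi.le).symm
  have hed : Real.exp 1 = d ^ 2 := (Real.sq_sqrt he.le).symm
  have h2s : (2:ℝ) = s2 ^ 2 := (Real.sq_sqrt (by norm_num)).symm
  have hfac0 : (Nat.factorial (k-1) : ℝ) ≠ 0 := by positivity
  rw [hNa, hkc, hpib, hed, h2s]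
  field_simp
  ring_nf
  field_simp
  rw [← mul_pow, ← mul_pow, ← mul_pow, show s2 * b * (1 / s2) * (1 / b) = 1 by field_simp, one_pow]

end StirlingHelper

/-- as `k → ∞` through positive integers with `χ(−1) = (−1)^k`,
`|L(χ,1−k)| / ( 2·e^{−1/2}·(kF/(2πe))^{k−1/2} ) → 1`. -/
theorem abs_LFunction_one_sub_asymptotic
    (F : ℕ) [NeZero F] (χ : DirichletCharacter ℂ F) (hχ : χ.IsPrimitive) :
    Tendsto
      (fun k : ℕ =>
        ‖χ.LFunction (1 - (k : ℂ))‖ /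
          (2 * Real.exp (-(1 / 2)) *
            ((k * F) / (2 * Real.pi * Real.exp 1)) ^ ((k : ℝ) - 1 / 2)))
      (atTop ⊓ Filter.principal {k : ℕ | 1 ≤ k ∧ χ (-1) = (-1) ^ k})
      (𝓝 1) := by
  have hsp : Real.sqrt Real.pi ≠ 0 := by positivity
  have h1 : Tendsto (fun k : ℕ ↦ Stirling.stirlingSeq k / Real.sqrt Real.pi) atTop (𝓝 1) := by
    have h := Stirling.tendsto_stirlingSeq_sqrt_pi.div_const (Real.sqrt Real.pi)
    rwa [div_self hsp] at h
  have h2 : Tendsto (fun k : ℕ ↦ ‖χ⁻¹.LFunction k‖) atTop (𝓝 1) := by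
    have h := (continuous_norm.tendsto 1).comp (tendsto_LFunction_atTop χ⁻¹)
    simpa [Function.comp_def] using h
  have hlim : Tendsto (fun k : ℕ ↦ Stirling.stirlingSeq k / Real.sqrt Real.pi *
      ‖χ⁻¹.LFunction k‖) atTop (𝓝 1) := by
    simpa using h1.mul h2
  refine Tendsto.congr' ?_ (hlim.mono_left inf_le_left)
  rw [EventuallyEq, eventually_inf_principal]
  filter_upwards [eventually_ge_atTop 2] with k hk2 hkS
  rw [abs_LFunction_one_sub' hχ hk2 hkS.2, mul_div_right_comm,
    ratio_eq (Nat.pos_of_ne_zero (NeZero.ne F)) hk2]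
end
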